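/- Let d ≥ 2 be an integer, δ ∈ (0,1), and let N be a positive integer with N ≥ 36·ln(d)/δ². Let X be a binomial random variable with parameters N and p ∈ [0,1], and assume √p > δ. Then P[ |√p − √(X/N)| ≥ δ ] ≤ 1/d¹². -/

import Mathlib

open Real Finset


lemma exp_le_quad_neg {x : ℝ} (hx : x ≤ 0) : Real.exp x ≤ 1 + x + x^2/2 := by
  have hder : ∀ y : ℝ, HasDerivAt (fun z => 1 + z + z^2/2 - Real.exp z)
      (1 + y - Real.exp y) y := by
    intro y
    have h1 : HasDerivAt (fun z : ℝ => 1 + z + z^2/2) (1 + y) y := by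
      have := ((hasDerivAt_id y).const_add (1:ℝ)).add ((hasDerivAt_pow 2 y).div_const 2)
      refine this.congr_deriv ?_
      push_cast
      ring
    exact h1.sub (Real.hasDerivAt_exp y)
  have hanti : Antitone (fun z : ℝ => 1 + z + z^2/2 - Real.exp z) := by
    apply antitone_of_deriv_nonpos
    · exact fun y => (hder y).differentiableAt
    · intro y
      rw [(hder y).deriv]
      nlinarith [Real.add_one_le_exp y]
  have := hanti hx
  simp only [Real.exp_zero] at this
  nlinarith [this]

lemma exp_le_quad_pos {x : ℝ} (h0 : 0 ≤ x) (h1 : x ≤ 1) : Real.exp x ≤ 1 + x + x^2 := by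
  have := Real.exp_bound' h0 h1 (n := 2) (by norm_num)
  simp [Finset.sum_range_succ] at this
  nlinarith [sq_nonneg x]


lemma binom_mgf (N : ℕ) (p t : ℝ) :
    ∑ k ∈ Finset.range (N+1), (N.choose k : ℝ) * p^k * (1-p)^(N-k) * Real.exp (t*k)
      = (1 - p + p * Real.exp t)^N := by
  rw [show (1 - p + p * Real.exp t) = (p * Real.exp t + (1-p)) by ring, add_pow]
  apply Finset.sum_congr rfl
  intro k _
  rw [mul_pow, ← Real.exp_nat_mul, mul_comm (k:ℝ) t]
  ring

lemma chernoff_upper (N : ℕ) (p : ℝ) (hp0 : 0 ≤ p) (hp1 : p ≤ 1) (t a : ℝ) (ht : 0 ≤ t) :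
    ∑ k ∈ (Finset.range (N+1)).filter (fun k : ℕ => a ≤ (k:ℝ)),
      (N.choose k : ℝ) * p^k * (1-p)^(N-k)
      ≤ Real.exp ((N:ℝ) * p * (Real.exp t - 1) - t * a) := by
  have hf : ∀ k, 0 ≤ (N.choose k : ℝ) * p^k * (1-p)^(N-k) := fun k => by
    have : (0:ℝ) ≤ 1 - p := by linarith
    positivity
  have step1 : ∑ k ∈ (Finset.range (N+1)).filter (fun k : ℕ => a ≤ (k:ℝ)),
      (N.choose k : ℝ) * p^k * (1-p)^(N-k)
      ≤ ∑ k ∈ Finset.range (N+1),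
        ((N.choose k : ℝ) * p^k * (1-p)^(N-k) * Real.exp (t*k)) * Real.exp (-(t*a)) := by
    rw [← Finset.sum_filter_add_sum_filter_not (Finset.range (N+1)) (fun k : ℕ => a ≤ (k:ℝ))]
    have h2 : (0:ℝ) ≤ ∑ k ∈ (Finset.range (N+1)).filter (fun k : ℕ => ¬ a ≤ (k:ℝ)),
        ((N.choose k : ℝ) * p^k * (1-p)^(N-k) * Real.exp (t*k)) * Real.exp (-(t*a)) := by
      apply Finset.sum_nonneg
      intro k _
      have := hf k
      positivity
    have h1 : ∑ k ∈ (Finset.range (N+1)).filter (fun k : ℕ => a ≤ (k:ℝ)),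
        (N.choose k : ℝ) * p^k * (1-p)^(N-k)
        ≤ ∑ k ∈ (Finset.range (N+1)).filter (fun k : ℕ => a ≤ (k:ℝ)),
        ((N.choose k : ℝ) * p^k * (1-p)^(N-k) * Real.exp (t*k)) * Real.exp (-(t*a)) := by
      apply Finset.sum_le_sum
      intro k hk
      rw [Finset.mem_filter] at hk
      have hka : a ≤ (k:ℝ) := hk.2
      have : (1:ℝ) ≤ Real.exp (t*k) * Real.exp (-(t*a)) := by
        rw [← Real.exp_add, ← Real.exp_zero]
        apply Real.exp_le_exp.mpr
        nlinarith
      calc (N.choose k : ℝ) * p^k * (1-p)^(N-k)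
          ≤ ((N.choose k : ℝ) * p^k * (1-p)^(N-k)) * (Real.exp (t*k) * Real.exp (-(t*a))) :=
            le_mul_of_one_le_right (hf k) this
        _ = ((N.choose k : ℝ) * p^k * (1-p)^(N-k) * Real.exp (t*k)) * Real.exp (-(t*a)) := by ring
    linarith
  have step2 : ∑ k ∈ Finset.range (N+1),
      ((N.choose k : ℝ) * p^k * (1-p)^(N-k) * Real.exp (t*k)) * Real.exp (-(t*a))
      = (1 - p + p * Real.exp t)^N * Real.exp (-(t*a)) := by
    rw [← Finset.sum_mul, binom_mgf]
  have step3 : (1 - p + p * Real.exp t)^N ≤ Real.exp ((N:ℝ) * p * (Real.exp t - 1)) := by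
    have hbase : 0 ≤ 1 - p + p * Real.exp t := by
      have : 0 ≤ p * Real.exp t := by positivity
      linarith
    have hle : 1 - p + p * Real.exp t ≤ Real.exp (p * (Real.exp t - 1)) := by
      have := Real.add_one_le_exp (p * (Real.exp t - 1))
      linarith
    calc (1 - p + p * Real.exp t)^N ≤ (Real.exp (p * (Real.exp t - 1)))^N :=
          pow_le_pow_left₀ hbase hle N
      _ = Real.exp ((N:ℝ) * (p * (Real.exp t - 1))) := (Real.exp_nat_mul _ N).symm
      _ = Real.exp ((N:ℝ) * p * (Real.exp t - 1)) := by ring_nf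
  calc _ ≤ (1 - p + p * Real.exp t)^N * Real.exp (-(t*a)) := step1.trans_eq step2
    _ ≤ Real.exp ((N:ℝ) * p * (Real.exp t - 1)) * Real.exp (-(t*a)) := by
        apply mul_le_mul_of_nonneg_right step3 (Real.exp_nonneg _)
    _ = Real.exp ((N:ℝ) * p * (Real.exp t - 1) - t * a) := by
        rw [← Real.exp_add]; ring_nf

lemma chernoff_lower (N : ℕ) (p : ℝ) (hp0 : 0 ≤ p) (hp1 : p ≤ 1) (t b : ℝ) (ht : 0 ≤ t) :
    ∑ k ∈ (Finset.range (N+1)).filter (fun k : ℕ => (k:ℝ) ≤ b),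
      (N.choose k : ℝ) * p^k * (1-p)^(N-k)
      ≤ Real.exp ((N:ℝ) * p * (Real.exp (-t) - 1) + t * b) := by
  have hf : ∀ k, 0 ≤ (N.choose k : ℝ) * p^k * (1-p)^(N-k) := fun k => by
    have : (0:ℝ) ≤ 1 - p := by linarith
    positivity
  have step1 : ∑ k ∈ (Finset.range (N+1)).filter (fun k : ℕ => (k:ℝ) ≤ b),
      (N.choose k : ℝ) * p^k * (1-p)^(N-k)
      ≤ ∑ k ∈ Finset.range (N+1),
        ((N.choose k : ℝ) * p^k * (1-p)^(N-k) * Real.exp ((-t)*k)) * Real.exp (t*b) := by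
    rw [← Finset.sum_filter_add_sum_filter_not (Finset.range (N+1)) (fun k : ℕ => (k:ℝ) ≤ b)]
    have h2 : (0:ℝ) ≤ ∑ k ∈ (Finset.range (N+1)).filter (fun k : ℕ => ¬ (k:ℝ) ≤ b),
        ((N.choose k : ℝ) * p^k * (1-p)^(N-k) * Real.exp ((-t)*k)) * Real.exp (t*b) := by
      apply Finset.sum_nonneg
      intro k _
      have := hf k
      positivity
    have h1 : ∑ k ∈ (Finset.range (N+1)).filter (fun k : ℕ => (k:ℝ) ≤ b),
        (N.choose k : ℝ) * p^k * (1-p)^(N-k)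
        ≤ ∑ k ∈ (Finset.range (N+1)).filter (fun k : ℕ => (k:ℝ) ≤ b),
        ((N.choose k : ℝ) * p^k * (1-p)^(N-k) * Real.exp ((-t)*k)) * Real.exp (t*b) := by
      apply Finset.sum_le_sum
      intro k hk
      rw [Finset.mem_filter] at hk
      have hkb : (k:ℝ) ≤ b := hk.2
      have : (1:ℝ) ≤ Real.exp ((-t)*k) * Real.exp (t*b) := by
        rw [← Real.exp_add, ← Real.exp_zero]
        apply Real.exp_le_exp.mpr
        nlinarith
      calc (N.choose k : ℝ) * p^k * (1-p)^(N-k)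
          ≤ ((N.choose k : ℝ) * p^k * (1-p)^(N-k)) * (Real.exp ((-t)*k) * Real.exp (t*b)) :=
            le_mul_of_one_le_right (hf k) this
        _ = ((N.choose k : ℝ) * p^k * (1-p)^(N-k) * Real.exp ((-t)*k)) * Real.exp (t*b) := by ring
    linarith
  have step2 : ∑ k ∈ Finset.range (N+1),
      ((N.choose k : ℝ) * p^k * (1-p)^(N-k) * Real.exp ((-t)*k)) * Real.exp (t*b)
      = (1 - p + p * Real.exp (-t))^N * Real.exp (t*b) := by
    rw [← Finset.sum_mul, binom_mgf]
  have step3 : (1 - p + p * Real.exp (-t))^N ≤ Real.exp ((N:ℝ) * p * (Real.exp (-t) - 1)) := by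
    have hbase : 0 ≤ 1 - p + p * Real.exp (-t) := by
      have : 0 ≤ p * Real.exp (-t) := by positivity
      linarith
    have hle : 1 - p + p * Real.exp (-t) ≤ Real.exp (p * (Real.exp (-t) - 1)) := by
      have := Real.add_one_le_exp (p * (Real.exp (-t) - 1))
      linarith
    calc (1 - p + p * Real.exp (-t))^N ≤ (Real.exp (p * (Real.exp (-t) - 1)))^N :=
          pow_le_pow_left₀ hbase hle N
      _ = Real.exp ((N:ℝ) * (p * (Real.exp (-t) - 1))) := (Real.exp_nat_mul _ N).symm
      _ = Real.exp ((N:ℝ) * p * (Real.exp (-t) - 1)) := by ring_nf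
  calc _ ≤ (1 - p + p * Real.exp (-t))^N * Real.exp (t*b) := step1.trans_eq step2
    _ ≤ Real.exp ((N:ℝ) * p * (Real.exp (-t) - 1)) * Real.exp (t*b) := by
        apply mul_le_mul_of_nonneg_right step3 (Real.exp_nonneg _)
    _ = Real.exp ((N:ℝ) * p * (Real.exp (-t) - 1) + t * b) := by
        rw [← Real.exp_add]


lemma upper_ineq {s δ p : ℝ} (hδ0 : 0 < δ) (hsδ : δ < s) (hps : p = s^2) :
    -(δ*(2*s+δ))^2/(4*p) ≤ -δ^2 := by
  have hs0 : 0 < s := hδ0.trans hsδ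
  have hp : 0 < p := by nlinarith
  rw [div_le_iff₀ (by positivity), hps]
  nlinarith [mul_nonneg (mul_nonneg hδ0.le hδ0.le) (mul_nonneg hδ0.le hs0.le)]
lemma lower_ineq {s δ p : ℝ} (hδ0 : 0 < δ) (hsδ : δ < s) (hps : p = s^2) :
    -(δ*(2*s-δ))^2/(2*p) ≤ -δ^2/2 := by
  have hs0 : 0 < s := hδ0.trans hsδ
  have hp : 0 < p := by nlinarith
  rw [div_le_div_iff₀ (by positivity) (by norm_num), hps]
  nlinarith [mul_nonneg (mul_nonneg hδ0.le hδ0.le)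
    (mul_nonneg (by linarith : (0:ℝ) ≤ 3*s-δ) (by linarith : (0:ℝ) ≤ s-δ))]
lemma upper_case2 {s δ p e : ℝ} (hδ0 : 0 < δ) (hsδ : δ < s) (hps : p = s^2)
    (hcase : 2*p < δ * (2*s + δ)) (he1 : e < 2.7182818286) (he2 : (2:ℝ) < e) :
    p * (e - 1) - (s+δ)^2 ≤ -δ^2 := by
  have hs0 : 0 < s := hδ0.trans hsδ
  have hΔ3 : 3 * δ^2 ≤ δ * (2*s + δ) := by nlinarith
  nlinarith [mul_pos hδ0 hs0]



lemma combine_bound (d N : ℕ) (hd : 2 ≤ d) (δ : ℝ)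
    (hNδ : 36 * Real.log d ≤ (N:ℝ) * δ^2) (hlogd : 0 < Real.log d) :
    Real.exp (-((N:ℝ) * δ^2 / 2)) + Real.exp (-((N:ℝ) * δ^2)) ≤ 1 / (d:ℝ)^12 := by
  have hd0 : (0:ℝ) < d := by
    have : (0:ℕ) < d := by omega
    exact_mod_cast this
  have hexp18 : Real.exp (-((N:ℝ) * δ^2 / 2)) ≤ 1 / (d:ℝ)^18 := by
    have h : Real.exp (-((N:ℝ) * δ^2 / 2)) ≤ Real.exp (-(18 * Real.log d)) := by
      apply Real.exp_le_exp.mpr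
      linarith
    refine h.trans_eq ?_
    rw [Real.exp_neg]
    rw [show (18:ℝ) * Real.log d = ((18:ℕ):ℝ) * Real.log d by norm_num,
      Real.exp_nat_mul, Real.exp_log hd0]
    norm_num
  have hexp36 : Real.exp (-((N:ℝ) * δ^2)) ≤ 1 / (d:ℝ)^18 := by
    refine le_trans (Real.exp_le_exp.mpr ?_) hexp18
    nlinarith
  have hfinal : (2:ℝ) / (d:ℝ)^18 ≤ 1 / (d:ℝ)^12 := by
    rw [div_le_div_iff₀ (by positivity) (by positivity)]
    have hd2 : (2:ℝ) ≤ (d:ℝ) := by exact_mod_cast hd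
    have h6 : (2:ℝ)^6 ≤ (d:ℝ)^6 := pow_le_pow_left₀ (by norm_num) hd2 6
    calc (2:ℝ) * (d:ℝ)^12 ≤ (2:ℝ)^6 * (d:ℝ)^12 := by nlinarith [pow_pos hd0 12]
      _ ≤ (d:ℝ)^6 * (d:ℝ)^12 := by nlinarith [pow_pos hd0 12]
      _ = 1 * (d:ℝ)^18 := by ring
  have h2 : (2:ℝ) / (d:ℝ)^18 = 1/(d:ℝ)^18 + 1/(d:ℝ)^18 := by ring
  linarith

lemma split_sum (N : ℕ) (hN0 : 0 < N) (p δ a b : ℝ) (hδ0 : 0 < δ)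
    (hδs : δ < Real.sqrt p) (hp0 : 0 ≤ p) (hp1 : p ≤ 1)
    (ha : a = (N:ℝ) * (Real.sqrt p + δ)^2) (hb : b = (N:ℝ) * (Real.sqrt p - δ)^2) :
    ∑ k ∈ Finset.range (N+1),
      (if δ ≤ |Real.sqrt p - Real.sqrt ((k:ℝ) / (N:ℝ))| then
        (N.choose k : ℝ) * p^k * (1-p)^(N-k) else 0)
      ≤ (∑ k ∈ (Finset.range (N+1)).filter (fun k : ℕ => (k:ℝ) ≤ b),
          (N.choose k : ℝ) * p^k * (1-p)^(N-k))
        + ∑ k ∈ (Finset.range (N+1)).filter (fun k : ℕ => a ≤ (k:ℝ)),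
          (N.choose k : ℝ) * p^k * (1-p)^(N-k) := by
  set s := Real.sqrt p with hs
  have hs0 : 0 < s := hδ0.trans hδs
  have hNpos : (0:ℝ) < N := by exact_mod_cast hN0
  have hf : ∀ k, 0 ≤ (N.choose k : ℝ) * p^k * (1-p)^(N-k) := fun k => by
    have : (0:ℝ) ≤ 1 - p := by linarith
    positivity
  rw [← Finset.sum_filter]
  have hsub : (Finset.range (N+1)).filter
      (fun k : ℕ => δ ≤ |s - Real.sqrt ((k:ℝ) / (N:ℝ))|)
      ⊆ ((Finset.range (N+1)).filter (fun k : ℕ => (k:ℝ) ≤ b))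
        ∪ ((Finset.range (N+1)).filter (fun k : ℕ => a ≤ (k:ℝ))) := by
    intro k hk
    rw [Finset.mem_filter] at hk
    obtain ⟨hkr, hkabs⟩ := hk
    rw [Finset.mem_union, Finset.mem_filter, Finset.mem_filter]
    have hkN0 : (0:ℝ) ≤ (k:ℝ) / (N:ℝ) := by positivity
    have hsq : Real.sqrt ((k:ℝ)/(N:ℝ)) ^ 2 = (k:ℝ)/(N:ℝ) := Real.sq_sqrt hkN0
    have hsqnn : 0 ≤ Real.sqrt ((k:ℝ)/(N:ℝ)) := Real.sqrt_nonneg _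
    rcases abs_cases (s - Real.sqrt ((k:ℝ)/(N:ℝ))) with ⟨heq, _⟩ | ⟨heq, _⟩
    · left
      refine ⟨hkr, ?_⟩
      rw [heq] at hkabs
      have h1 : Real.sqrt ((k:ℝ)/(N:ℝ)) ≤ s - δ := by linarith
      have h2 : (k:ℝ)/(N:ℝ) ≤ (s-δ)^2 := by
        rw [← hsq]
        have hsd : 0 ≤ s - δ := by linarith
        nlinarith
      rw [hb]
      rw [div_le_iff₀ hNpos] at h2
      linarith
    · right
      refine ⟨hkr, ?_⟩
      rw [heq] at hkabs
      have h1 : s + δ ≤ Real.sqrt ((k:ℝ)/(N:ℝ)) := by linarith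
      have h2 : (s+δ)^2 ≤ (k:ℝ)/(N:ℝ) := by
        rw [← hsq]
        have hsd : 0 ≤ s + δ := by linarith
        nlinarith
      rw [ha]
      rw [le_div_iff₀ hNpos] at h2
      linarith
  have h1 := Finset.sum_le_sum_of_subset_of_nonneg hsub (fun k _ _ => hf k)
  have h2 := Finset.sum_union_inter
    (s₁ := (Finset.range (N+1)).filter (fun k : ℕ => (k:ℝ) ≤ b))
    (s₂ := (Finset.range (N+1)).filter (fun k : ℕ => a ≤ (k:ℝ)))
    (f := fun k => (N.choose k : ℝ) * p^k * (1-p)^(N-k))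
  have h3 : (0:ℝ) ≤ ∑ k ∈ ((Finset.range (N+1)).filter (fun k : ℕ => (k:ℝ) ≤ b))
      ∩ ((Finset.range (N+1)).filter (fun k : ℕ => a ≤ (k:ℝ))),
      (N.choose k : ℝ) * p^k * (1-p)^(N-k) :=
    Finset.sum_nonneg fun k _ => hf k
  linarith

lemma tail_real (d : ℕ) (hd : 2 ≤ d) (δ : ℝ) (hδ0 : 0 < δ) (hδ1 : δ < 1)
    (N : ℕ) (hN0 : 0 < N) (hN : 36 * Real.log d / δ ^ 2 ≤ (N : ℝ))
    (p : ℝ) (hp0 : 0 ≤ p) (hp1 : p ≤ 1) (hpδ : δ < Real.sqrt p) :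
    ∑ k ∈ Finset.range (N+1),
      (if δ ≤ |Real.sqrt p - Real.sqrt ((k:ℝ) / (N:ℝ))| then
        (N.choose k : ℝ) * p^k * (1-p)^(N-k) else 0)
      ≤ 1 / (d:ℝ)^12 := by
  set s := Real.sqrt p with hs
  have hs0 : 0 < s := lt_trans hδ0 hpδ
  have hps : p = s^2 := (Real.sq_sqrt hp0).symm
  have hs1 : s ≤ 1 := Real.sqrt_le_one.mpr hp1
  have hppos : 0 < p := by nlinarith
  have hNpos : (0:ℝ) < N := by exact_mod_cast hN0
  have hf : ∀ k, 0 ≤ (N.choose k : ℝ) * p^k * (1-p)^(N-k) := fun k => by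
    have : (0:ℝ) ≤ 1 - p := by linarith
    positivity
  set a := (N:ℝ) * (s+δ)^2 with ha
  set b := (N:ℝ) * (s-δ)^2 with hb
  have hlogd : 0 < Real.log d := by
    apply Real.log_pos
    exact_mod_cast (by omega : (1:ℕ) < d)
  have hNδ : 36 * Real.log d ≤ (N:ℝ) * δ^2 := by
    rw [div_le_iff₀ (by positivity)] at hN
    linarith [hN]
  -- upper tail
  have hupper : ∑ k ∈ (Finset.range (N+1)).filter (fun k : ℕ => a ≤ (k:ℝ)),
      (N.choose k : ℝ) * p^k * (1-p)^(N-k) ≤ Real.exp (-((N:ℝ) * δ^2)) := by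
    by_cases hcase : δ * (2*s + δ) ≤ 2*p
    · set t := δ * (2*s + δ) / (2*p) with htdef
      have ht0 : 0 ≤ t := by positivity
      have ht1 : t ≤ 1 := by
        rw [htdef, div_le_one (by positivity)]
        exact hcase
      refine (chernoff_upper N p hp0 hp1 t a ht0).trans (Real.exp_le_exp.mpr ?_)
      have hexp := exp_le_quad_pos ht0 ht1
      have hkey : p * (t + t^2) - t * (s+δ)^2 = -(δ*(2*s+δ))^2/(4*p) := by
        rw [htdef, hps]
        field_simp
        ring
      have hineq : -(δ*(2*s+δ))^2/(4*p) ≤ -δ^2 := upper_ineq hδ0 hpδ hps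
      have hperunit : p * (t + t^2) - t * (s+δ)^2 ≤ -δ^2 := hkey.trans_le hineq
      have hNp : (0:ℝ) ≤ (N:ℝ) * p := by positivity
      have h1 : (N:ℝ) * p * (Real.exp t - 1) ≤ (N:ℝ) * p * (t + t^2) := by
        apply mul_le_mul_of_nonneg_left _ hNp
        linarith
      have h2 : (N:ℝ) * (p * (t + t^2) - t * (s+δ)^2) ≤ (N:ℝ) * (-δ^2) :=
        mul_le_mul_of_nonneg_left hperunit hNpos.le
      have hid : (N:ℝ) * p * (t + t^2) - t * a = (N:ℝ) * (p * (t + t^2) - t * (s+δ)^2) := by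
        rw [ha]; ring
      have hid2 : (N:ℝ) * (-δ^2) = -((N:ℝ) * δ^2) := by ring
      linarith
    · push_neg at hcase
      refine (chernoff_upper N p hp0 hp1 1 a (by norm_num)).trans (Real.exp_le_exp.mpr ?_)
      have he1 : Real.exp 1 < 2.7182818286 := Real.exp_one_lt_d9
      have he2 : (2:ℝ) < Real.exp 1 := by
        have := Real.exp_one_gt_d9
        linarith
      have hperunit : p * (Real.exp 1 - 1) - (s+δ)^2 ≤ -δ^2 :=
        upper_case2 hδ0 hpδ hps hcase he1 he2
      have h2 : (N:ℝ) * (p * (Real.exp 1 - 1) - (s+δ)^2) ≤ (N:ℝ) * (-δ^2) :=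
        mul_le_mul_of_nonneg_left hperunit hNpos.le
      have hid : (N:ℝ) * p * (Real.exp 1 - 1) - 1 * a
          = (N:ℝ) * (p * (Real.exp 1 - 1) - (s+δ)^2) := by rw [ha]; ring
      have hid2 : (N:ℝ) * (-δ^2) = -((N:ℝ) * δ^2) := by ring
      linarith
  -- lower tail
  have hlower : ∑ k ∈ (Finset.range (N+1)).filter (fun k : ℕ => (k:ℝ) ≤ b),
      (N.choose k : ℝ) * p^k * (1-p)^(N-k) ≤ Real.exp (-((N:ℝ) * δ^2 / 2)) := by
    set t := δ * (2*s - δ) / p with htdef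
    have hΔ0 : 0 < δ * (2*s - δ) := by nlinarith
    have ht0 : 0 ≤ t := by positivity
    refine (chernoff_lower N p hp0 hp1 t b ht0).trans (Real.exp_le_exp.mpr ?_)
    have hexp := exp_le_quad_neg (x := -t) (by linarith)
    have hkey : p * (-t + t^2/2) + t * (s-δ)^2 = -(δ*(2*s-δ))^2/(2*p) := by
      rw [htdef, hps]
      field_simp
      ring
    have hineq : -(δ*(2*s-δ))^2/(2*p) ≤ -δ^2/2 := lower_ineq hδ0 hpδ hps
    have hperunit : p * (-t + t^2/2) + t * (s-δ)^2 ≤ -δ^2/2 := hkey.trans_le hineq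
    have hNp : (0:ℝ) ≤ (N:ℝ) * p := by positivity
    have h1 : (N:ℝ) * p * (Real.exp (-t) - 1) ≤ (N:ℝ) * p * (-t + t^2/2) := by
      apply mul_le_mul_of_nonneg_left _ hNp
      nlinarith
    have h2 : (N:ℝ) * (p * (-t + t^2/2) + t * (s-δ)^2) ≤ (N:ℝ) * (-δ^2/2) :=
      mul_le_mul_of_nonneg_left hperunit hNpos.le
    have hid : (N:ℝ) * p * (-t + t^2/2) + t * b
        = (N:ℝ) * (p * (-t + t^2/2) + t * (s-δ)^2) := by rw [hb]; ring
    have hid2 : (N:ℝ) * (-δ^2/2) = -((N:ℝ) * δ^2 / 2) := by ring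
    linarith
  have hsplit := split_sum N hN0 p δ a b hδ0 hpδ hp0 hp1 ha hb
  calc _ ≤ _ := hsplit
    _ ≤ Real.exp (-((N:ℝ) * δ^2 / 2)) + Real.exp (-((N:ℝ) * δ^2)) := add_le_add hlower hupper
    _ ≤ 1 / (d:ℝ)^12 := combine_bound d N hd δ hNδ hlogd



/-- **Concentration of the estimated amplitude.** For `N ≥ 36 ln(d)/δ²` and a binomial
random variable `X` with parameters `N` and `p` with `√p > δ`,
`P[|√p - √(X/N)| ≥ δ] ≤ 1/d¹²`. -/
theorem binomial_sqrt_concentration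
    (d : ℕ) (hd : 2 ≤ d) (δ : ℝ) (hδ0 : 0 < δ) (hδ1 : δ < 1)
    (N : ℕ) (hN0 : 0 < N) (hN : 36 * Real.log d / δ ^ 2 ≤ (N : ℝ))
    (p : ℝ) (hp0 : 0 ≤ p) (hp1 : p ≤ 1) (hpδ : δ < Real.sqrt p) :
    (PMF.binomial (Real.toNNReal p) (Real.toNNReal_le_one.mpr hp1) N).toMeasure
      {k : Fin (N + 1) | δ ≤ |Real.sqrt p - Real.sqrt (((k : ℕ) : ℝ) / (N : ℝ))|} ≤
      ENNReal.ofReal (1 / (d : ℝ) ^ 12) := by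
  set P := PMF.binomial (Real.toNNReal p) (Real.toNNReal_le_one.mpr hp1) N with hP
  set S := {k : Fin (N + 1) | δ ≤ |Real.sqrt p - Real.sqrt (((k : ℕ) : ℝ) / (N : ℝ))|} with hS
  have hmeas : MeasurableSet S := MeasurableSet.of_discrete
  rw [PMF.toMeasure_apply P hmeas, tsum_fintype]
  have hkey : ∀ k : Fin (N+1), P k
      = ENNReal.ofReal ((N.choose (k:ℕ) : ℝ) * p^(k:ℕ) * (1-p)^(N-(k:ℕ))) := by
    intro k
    rw [hP, PMF.binomial_apply]
    simp only [Fin.val_last]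
    rw [ENNReal.ofReal, ← ENNReal.coe_natCast, ← ENNReal.coe_one, ← ENNReal.coe_sub, ← ENNReal.coe_pow, ← ENNReal.coe_pow, ← ENNReal.coe_mul, ← ENNReal.coe_mul, ENNReal.coe_inj]
    ext
    have hp' : Real.toNNReal p ≤ 1 := Real.toNNReal_le_one.mpr hp1
    simp [NNReal.coe_sub hp', Real.coe_toNNReal _ hp0]
    have h1p : (0:ℝ) ≤ 1 - p := by linarith
    rw [max_eq_left (by positivity)]
    ring
  have hind : ∀ k : Fin (N+1), S.indicator P k
      = ENNReal.ofReal (if δ ≤ |Real.sqrt p - Real.sqrt (((k:ℕ):ℝ) / (N:ℝ))| then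
          (N.choose (k:ℕ) : ℝ) * p^(k:ℕ) * (1-p)^(N-(k:ℕ)) else 0) := by
    intro k
    rw [Set.indicator_apply]
    by_cases h : k ∈ S
    · rw [if_pos h, hkey k, if_pos (by exact h)]
    · rw [if_neg h, if_neg (by exact h), ENNReal.ofReal_zero]
  calc ∑ k : Fin (N+1), S.indicator P k
      = ∑ k : Fin (N+1), ENNReal.ofReal
          (if δ ≤ |Real.sqrt p - Real.sqrt (((k:ℕ):ℝ) / (N:ℝ))| then
            (N.choose (k:ℕ) : ℝ) * p^(k:ℕ) * (1-p)^(N-(k:ℕ)) else 0) :=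
        Finset.sum_congr rfl (fun k _ => hind k)
    _ = ENNReal.ofReal (∑ k : Fin (N+1),
          (if δ ≤ |Real.sqrt p - Real.sqrt (((k:ℕ):ℝ) / (N:ℝ))| then
            (N.choose (k:ℕ) : ℝ) * p^(k:ℕ) * (1-p)^(N-(k:ℕ)) else 0)) := by
        rw [ENNReal.ofReal_sum_of_nonneg]
        intro k _
        split_ifs with h
        · have : (0:ℝ) ≤ 1 - p := by linarith
          positivity
        · exact le_rfl
    _ = ENNReal.ofReal (∑ k ∈ Finset.range (N+1),
          (if δ ≤ |Real.sqrt p - Real.sqrt ((k:ℝ) / (N:ℝ))| then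
            (N.choose k : ℝ) * p^k * (1-p)^(N-k) else 0)) := by
        congr 1
        exact Fin.sum_univ_eq_sum_range (fun k => if δ ≤ |Real.sqrt p - Real.sqrt ((k:ℝ) / (N:ℝ))| then (N.choose k : ℝ) * p^k * (1-p)^(N-k) else 0) (N+1)
    _ ≤ ENNReal.ofReal (1 / (d:ℝ)^12) :=
        ENNReal.ofReal_le_ofReal (tail_real d hd δ hδ0 hδ1 N hN0 hN p hp0 hp1 hpδ)
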